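/- Monotone lower bound for the drift at the traveling wave: let u^{TW}_t(x) = û(x - ct) with c > 0 be a traveling wave solution of u_t = -u + w∗F(u), û increasing from a₁ to a₂, F increasing. Define the truncated drift b̂_k(t) = -u^{TW}_t(k/m) + ∑_l w^m_{kl} F(u^{TW}_t(l/m)) + w^{m,+}_k F(u^{TW}_t(L)) + w^{m,-}_k F(u^{TW}_t(-L)) with w^m_{kl} = ∫_{l/m}^{(l+1)/m} w(k/m - y) dy, w^{m,+}_k = ∫_L^∞ w(k/m - y)dy, w^{m,-}_k = ∫_{-∞}^{-L} w(k/m - y)dy. Then -b̂_k(t) ≥ c û'(k/m - ct) - (F(u^{TW}_t(-L)) - F(a₁)). In particular, for fixed t, k, m, we have -b̂_k(t) → c û'(k/m - ct) > 0 bounds from below as L → ∞. -/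

import Mathlib

open MeasureTheory

/-- monotone lower bound for the (negative) truncated drift at the traveling
wave: `-b̂_k(t) ≥ c û'(k/m - ct) - (F(u^{TW}_t(-L)) - F(a₁))`. -/
theorem truncated_drift_lower_bound
    (w F uhat uhat' : ℝ → ℝ) (a₁ a₂ c t : ℝ) (m L : ℕ) (k : ℤ)
    (hm : 1 ≤ m) (hL : 0 < L)
    (hw_nonneg : ∀ x, 0 ≤ w x)
    (hw_symm : ∀ x, w (-x) = w x)
    (hw_int : Integrable w) (hw_mass : ∫ x, w x = 1)
    (hF_mono : StrictMono F) (hF_range : ∀ x, F x ∈ Set.Icc (0:ℝ) 1)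
    (huhat_deriv : ∀ x, HasDerivAt uhat (uhat' x) x)
    (huhat_mono : Monotone uhat)
    (huhat_range : ∀ x, uhat x ∈ Set.Icc a₁ a₂)
    (hc : 0 < c)
    (hTW : ∀ ξ, -(c * uhat' ξ) = -uhat ξ + ∫ y, w (ξ - y) * F (uhat y))
    (hk : k ∈ Finset.Icc (-(m * L : ℤ)) ((m * L : ℤ) - 1)) :
    -((-(uhat ((k : ℝ) / m - c * t))
        + (∑ l ∈ Finset.Icc (-(m * L : ℤ)) ((m * L : ℤ) - 1),
            (∫ y in ((l : ℝ) / m)..(((l : ℝ) + 1) / m), w ((k : ℝ) / m - y)) *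
              F (uhat ((l : ℝ) / m - c * t)))
        + (∫ y in Set.Ioi (L : ℝ), w ((k : ℝ) / m - y)) * F (uhat ((L : ℝ) - c * t))
        + (∫ y in Set.Iic (-(L : ℝ)), w ((k : ℝ) / m - y)) * F (uhat (-(L : ℝ) - c * t)))) ≥
      c * uhat' ((k : ℝ) / m - c * t) - (F (uhat (-(L : ℝ) - c * t)) - F a₁) := by
  have hm0 : (0:ℝ) < m := by exact_mod_cast hm
  have hL0 : (0:ℝ) < L := by exact_mod_cast hL
  set K : ℝ := (k:ℝ)/m with hKdef
  set G : ℝ → ℝ := fun y => F (uhat (y - c*t)) with hGdef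
  have hG_mono : Monotone G := fun y y' h =>
    hF_mono.monotone (huhat_mono (sub_le_sub_right h _))
  have hG_meas : Measurable G := hG_mono.measurable
  have hG0 : ∀ y, 0 ≤ G y := fun y => (hF_range _).1
  have hG1 : ∀ y, G y ≤ 1 := fun y => (hF_range _).2
  have hGa : ∀ y, F a₁ ≤ G y := fun y => hF_mono.monotone ((huhat_range _).1)
  have hwK_eq : (fun y => w (K - y)) = fun y => w (y - K) := by
    funext y; rw [← hw_symm (y - K), neg_sub]
  have hwK_int : Integrable (fun y => w (K - y)) := by
    rw [hwK_eq]; exact hw_int.comp_sub_right K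
  have hwK_mass : (∫ y, w (K - y)) = 1 := by
    rw [hwK_eq, integral_sub_right_eq_self w K]; exact hw_mass
  have hg_int : Integrable (fun y => w (K - y) * G y) := by
    have h := Integrable.bdd_mul (f := G) (c := 1) hwK_int hG_meas.aestronglyMeasurable
      (ae_of_all _ fun y => by rw [Real.norm_eq_abs, abs_of_nonneg (hG0 y)]; exact hG1 y)
    simpa [mul_comm] using h
  have hconv : (∫ y, w (K - y) * G y) = ∫ y, w ((K - c*t) - y) * F (uhat y) := by
    rw [← integral_sub_right_eq_self (fun z => w ((K - c*t) - z) * F (uhat z)) (c*t)]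
    congr 1; funext y
    have h1 : K - c*t - (y - c*t) = K - y := by ring
    simp only [hGdef]; rw [h1]
  have hTW' : c * uhat' (K - c*t) = uhat (K - c*t) - ∫ y, w (K - y) * G y := by
    have h := hTW (K - c*t); rw [hconv]; linarith
  have hsplit : (∫ y, w (K - y) * G y)
      = (∫ y in Set.Iic (-(L:ℝ)), w (K - y) * G y)
        + (∫ y in Set.Ioc (-(L:ℝ)) (L:ℝ), w (K - y) * G y)
        + (∫ y in Set.Ioi (L:ℝ), w (K - y) * G y) := by
    rw [← integral_add_compl (measurableSet_Iic (a := (L:ℝ))) hg_int, Set.compl_Iic]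
    congr 1
    rw [← setIntegral_union (Set.Iic_disjoint_Ioc le_rfl) measurableSet_Ioc
      hg_int.integrableOn hg_int.integrableOn, Set.Iic_union_Ioc_eq_Iic (by linarith)]
  have htail_plus : (∫ y in Set.Ioi (L:ℝ), w (K - y)) * G L
      ≤ ∫ y in Set.Ioi (L:ℝ), w (K - y) * G y := by
    rw [← integral_mul_const]
    refine setIntegral_mono_on (hwK_int.integrableOn.mul_const _) hg_int.integrableOn
      measurableSet_Ioi fun y hy => ?_
    exact mul_le_mul_of_nonneg_left (hG_mono (le_of_lt hy)) (hw_nonneg _)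
  have htail_minus : (∫ y in Set.Iic (-(L:ℝ)), w (K - y)) * F a₁
      ≤ ∫ y in Set.Iic (-(L:ℝ)), w (K - y) * G y := by
    rw [← integral_mul_const]
    refine setIntegral_mono_on (hwK_int.integrableOn.mul_const _) hg_int.integrableOn
      measurableSet_Iic fun y hy => ?_
    exact mul_le_mul_of_nonneg_left (hGa y) (hw_nonneg _)
  have hwm_nonneg : 0 ≤ ∫ y in Set.Iic (-(L:ℝ)), w (K - y) :=
    setIntegral_nonneg measurableSet_Iic fun y _ => hw_nonneg _
  have hwm_le : (∫ y in Set.Iic (-(L:ℝ)), w (K - y)) ≤ 1 := by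
    rw [← hwK_mass]
    exact setIntegral_le_integral hwK_int (ae_of_all _ fun y => hw_nonneg _)
  have hterm : ∀ l : ℤ, (∫ y in ((l:ℝ)/m)..(((l:ℝ)+1)/m), w (K - y)) * G ((l:ℝ)/m)
      ≤ ∫ y in ((l:ℝ)/m)..(((l:ℝ)+1)/m), w (K - y) * G y := by
    intro l
    have hle : (l:ℝ)/m ≤ ((l:ℝ)+1)/m := by gcongr; linarith
    rw [← intervalIntegral.integral_mul_const]
    refine intervalIntegral.integral_mono_on hle
      (hwK_int.intervalIntegrable.mul_const _)
      hg_int.intervalIntegrable fun y hy => ?_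
    exact mul_le_mul_of_nonneg_left (hG_mono hy.1) (hw_nonneg _)
  have hsum_mid : (∑ l ∈ Finset.Icc (-(m*L:ℤ)) ((m*L:ℤ)-1),
        ∫ y in ((l:ℝ)/m)..(((l:ℝ)+1)/m), w (K - y) * G y)
      = ∫ y in Set.Ioc (-(L:ℝ)) (L:ℝ), w (K - y) * G y := by
    have hadj := intervalIntegral.sum_integral_adjacent_intervals
      (a := fun i : ℕ => ((i:ℝ) - ((m*L:ℕ):ℝ))/m) (n := 2*(m*L)) (μ := volume)
      (f := fun y => w (K - y) * G y) (fun i _ => hg_int.intervalIntegrable)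
    have ha0 : (((0:ℕ):ℝ) - ((m*L:ℕ):ℝ))/m = -(L:ℝ) := by
      rw [div_eq_iff (ne_of_gt hm0)]; push_cast; ring
    have han : (((2*(m*L):ℕ):ℝ) - ((m*L:ℕ):ℝ))/m = (L:ℝ) := by
      rw [div_eq_iff (ne_of_gt hm0)]; push_cast; ring
    rw [ha0, han] at hadj
    rw [← intervalIntegral.integral_of_le (by linarith : -(L:ℝ) ≤ (L:ℝ)), ← hadj]
    refine (Finset.sum_nbij' (i := fun i : ℕ => (i:ℤ) - (m*L:ℤ))
      (j := fun l : ℤ => (l + (m*L:ℤ)).toNat) ?_ ?_ ?_ ?_ ?_).symm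
    · intro i hi
      simp only [Finset.mem_range] at hi
      simp only [Finset.mem_Icc]
      omega
    · intro l hl
      simp only [Finset.mem_Icc] at hl
      simp only [Finset.mem_range]
      omega
    · intro i hi
      simp only [Finset.mem_range] at hi
      omega
    · intro l hl
      simp only [Finset.mem_Icc] at hl
      omega
    · intro i hi
      congr 1
      · push_cast; ring
      · push_cast; ring
  have hS_le : (∑ l ∈ Finset.Icc (-(m*L:ℤ)) ((m*L:ℤ)-1),
      (∫ y in ((l:ℝ)/m)..(((l:ℝ)+1)/m), w (K - y)) * F (uhat ((l:ℝ)/m - c*t)))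
      ≤ ∫ y in Set.Ioc (-(L:ℝ)) (L:ℝ), w (K - y) * G y := by
    rw [← hsum_mid]
    refine Finset.sum_le_sum fun l _ => ?_
    have := hterm l
    simpa [hGdef] using this
  have hGL : G (L:ℝ) = F (uhat ((L:ℝ) - c*t)) := rfl
  have hGmL : G (-(L:ℝ)) = F (uhat (-(L:ℝ) - c*t)) := rfl
  have hFm_ge : F a₁ ≤ F (uhat (-(L:ℝ) - c*t)) := hF_mono.monotone ((huhat_range _).1)
  rw [hGL] at htail_plus
  have hprod : 0 ≤ (1 - ∫ y in Set.Iic (-(L:ℝ)), w (K - y)) *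
      (F (uhat (-(L:ℝ) - c*t)) - F a₁) :=
    mul_nonneg (by linarith) (by linarith)
  nlinarith [hS_le, htail_plus, htail_minus, hprod, hTW', hsplit]
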